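/- Fix n and A, and consider the graph whose vertices are the building sequences in S(n,A), with an edge between a and a' whenever a' is obtained from a by applying one of the four local operations PF(i,j), FV(i,j), FF(i,j), PV(i,j) (for some indices i,j) or one of their inverses, with the result again lying in S(n,A). Then this graph is connected: any building sequence in S(n,A) can be transformed into any other building sequence in S(n,A) by a finite sequence of these operations, with every intermediate sequence lying in S(n,A). -/

import Mathlib

/-- Moves of a Motzkin path: Up-right, Horizontal-right, Down-right. -/
inductive Move : Type
  | U : Move
  | H : Move
  | D : Move
deriving DecidableEq

open Move

/-- The vertical step of a move. -/
def Move.step : Move → ℤ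
  | U => 1
  | H => 0
  | D => -1

/-- The height of a path after its first `i` moves. -/
def heightAt (mz : List Move) (i : ℕ) : ℤ :=
  ((mz.take i).map Move.step).sum

/-- A word over {U,H,D} is a Motzkin path if it never goes below the x-axis
and ends on the x-axis. -/
def IsMotzkin (mz : List Move) : Prop :=
  (∀ i, 0 ≤ heightAt mz i) ∧ heightAt mz mz.length = 0

/-- The area between the x-axis and the path (sum of heights at integer points). -/
def area (mz : List Move) : ℤ :=
  ∑ i ∈ Finset.range (mz.length + 1), heightAt mz i

/-- `MZ n A` is the set of Motzkin paths of width `n` and area `A`. -/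
def MZ (n A : ℕ) : Set (List Move) :=
  {mz | mz.length = n ∧ IsMotzkin mz ∧ area mz = A}

/-- The weight `ω_i` of the `i`-th move (0-indexed): it is `h_i` for U and D moves
(height after the move for U, before the move for D) and `2h_i + 1` for H moves. -/
def moveWeight (mz : List Move) (i : ℕ) : ℤ :=
  match mz[i]? with
  | some U => heightAt mz (i + 1)
  | some D => heightAt mz i
  | some H => 2 * heightAt mz i + 1
  | none => 1

/-- The weight `ω(mz)` of a Motzkin path. -/
def weight (mz : List Move) : ℤ :=
  ∏ i ∈ Finset.range mz.length, moveWeight mz i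

/-- The total displacement `D(π) = Σ_i |i - π(i)|` of a permutation. -/
def totalDisp {n : ℕ} (π : Equiv.Perm (Fin n)) : ℤ :=
  ∑ i : Fin n, |((π i : ℕ) : ℤ) - ((i : ℕ) : ℤ)|

/-- The word over {U,H,D} associated to a permutation. -/
def toPath {n : ℕ} (π : Equiv.Perm (Fin n)) : List Move :=
  (List.finRange n).map fun i : Fin n =>
    if (i : ℕ) < (π i : ℕ) ∧ (i : ℕ) < (π.symm i : ℕ) then U
    else if (π i : ℕ) < (i : ℕ) ∧ (π.symm i : ℕ) < (i : ℕ) then D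
    else H

/-- The last fall length: the length of the maximal suffix consisting of D moves. -/
def lastFall (mz : List Move) : ℕ :=
  (mz.reverse.takeWhile (fun m => decide (m = D))).length

/-- The maximum height of a path. -/
def maxHeight (mz : List Move) : ℕ :=
  (Finset.range (mz.length + 1)).sup fun i => (heightAt mz i).toNat

/-- `flatsAt mz k` is the number of H moves of `mz` made at height `k`. -/
def flatsAt (mz : List Move) (k : ℕ) : ℕ :=
  ((Finset.range mz.length).filter fun j => mz[j]? = some H ∧ heightAt mz j = (k : ℤ)).card

/-- `peaksAt mz k` is the number of U moves of `mz` ending at height `k`. -/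
def peaksAt (mz : List Move) (k : ℕ) : ℕ :=
  ((Finset.range mz.length).filter fun j => mz[j]? = some U ∧ heightAt mz (j + 1) = (k : ℤ)).card

/-- `downsAt mz k` is the number of D moves of `mz` starting at height `k`. -/
def downsAt (mz : List Move) (k : ℕ) : ℕ :=
  ((Finset.range mz.length).filter fun j => mz[j]? = some D ∧ heightAt mz j = (k : ℤ)).card

/-- A candidate building sequence `(f_0, p_1, f_1, …, p_h, f_h)`, recorded as its
height `h` together with the flat counts `f` and peak counts `p`. -/
structure BSeq where
  h : ℕ
  f : ℕ → ℕ
  p : ℕ → ℕ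

/-- `Sset n A` is the set of building sequences for width `n` and area `A`:
all `p`-entries `p_1, …, p_h` are positive, entries beyond the height are zero, and the
width and area conditions hold. -/
def Sset (n A : ℕ) : Set BSeq :=
  {a | (∀ i, 1 ≤ i → i ≤ a.h → 0 < a.p i) ∧
       a.p 0 = 0 ∧
       (∀ i, a.h < i → a.p i = 0) ∧
       (∀ i, a.h < i → a.f i = 0) ∧
       (∑ i ∈ Finset.range (a.h + 1), a.f i) + 2 * (∑ i ∈ Finset.Icc 1 a.h, a.p i) = n ∧
       (∑ i ∈ Finset.range (a.h + 1), i * a.f i) +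
         (∑ i ∈ Finset.Icc 1 a.h, (2 * i - 1) * a.p i) = A}

/-- `mz` has building sequence `a`. -/
def hasBuildSeq (mz : List Move) (a : BSeq) : Prop :=
  maxHeight mz = a.h ∧ (∀ i, flatsAt mz i = a.f i) ∧ (∀ i, peaksAt mz i = a.p i)

/-- `perm(a) = ∏_{i=0}^h (2i+1)^{f_i} · ∏_{i=1}^h i^{2p_i}`. -/
def permWeight (a : BSeq) : ℕ :=
  (∏ i ∈ Finset.range (a.h + 1), (2 * i + 1) ^ a.f i) *
    ∏ i ∈ Finset.Icc 1 a.h, i ^ (2 * a.p i)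

/-- `m(a)`, the number of Motzkin paths with building sequence `a`. -/
def mcount (a : BSeq) : ℕ :=
  Nat.choose (a.f a.h + a.p a.h - 1) (a.p a.h - 1) *
    (∏ i ∈ Finset.Icc 1 (a.h - 1),
      Nat.choose (a.p (i + 1) + a.f i) (a.f i) *
        Nat.choose (a.p (i + 1) + a.f i + a.p i - 1) (a.p i - 1)) *
    Nat.choose (a.p 1 + a.f 0) (a.f 0)

/-- `M(n,A,l)`: the number of Motzkin paths of width `n`, area `A` and last fall length `l`
(for negative arguments there are no such paths, so the value is `0`; the value at
`(0,0,0)` is `1`, counting the empty path). -/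
noncomputable def Mcount (n A l : ℤ) : ℕ :=
  Nat.card {mz : List Move // (mz.length : ℤ) = n ∧ IsMotzkin mz ∧ area mz = A ∧
    (lastFall mz : ℤ) = l}

/-- `D(n,d,l)`: the sum of the weights of all Motzkin paths of width `n`, area `d` and
last fall length `l`. -/
noncomputable def Dw (n d l : ℤ) : ℤ :=
  ∑ᶠ mz ∈ {mz : List Move | (mz.length : ℤ) = n ∧ IsMotzkin mz ∧ area mz = d ∧
    (lastFall mz : ℤ) = l}, weight mz

/-- `M(n,A,h,p)`: the number of Motzkin paths of width `n`, area `A`, maximum height `h`,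
with exactly `p` U-moves ending at height `h` and no H-moves at height `h`. -/
noncomputable def Mtop (n A h p : ℤ) : ℕ :=
  Nat.card {mz : List Move // (mz.length : ℤ) = n ∧ IsMotzkin mz ∧ area mz = A ∧
    (maxHeight mz : ℤ) = h ∧ (peaksAt mz h.toNat : ℤ) = p ∧ flatsAt mz h.toNat = 0}

/-- `D(n,d,h,p)`: the sum of weights of Motzkin paths of width `n`, area `d`,
maximum height `h`, with exactly `p` U-moves ending at height `h` and no H-moves at height `h`. -/
noncomputable def Dtop (n d h p : ℤ) : ℤ :=
  ∑ᶠ mz ∈ {mz : List Move | (mz.length : ℤ) = n ∧ IsMotzkin mz ∧ area mz = d ∧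
    (maxHeight mz : ℤ) = h ∧ (peaksAt mz h.toNat : ℤ) = p ∧ flatsAt mz h.toNat = 0}, weight mz

/-- The area under the first `i` moves of a path (trapezoid rule; may be a half-integer). -/
def prefixArea (mz : List Move) (i : ℕ) : ℚ :=
  ∑ j ∈ Finset.range i, ((heightAt mz j : ℚ) + (heightAt mz (j + 1) : ℚ)) / 2

/-- The operation PF(i,j): `p_i ← p_i - 1`, `f_{i-1} ← f_{i-1} + 2`, `f_j ← f_j - 1`,
`f_{j+1} ← f_{j+1} + 1` (effects on coinciding indices add up). -/
def IsPF (i j : ℕ) (a b : BSeq) : Prop :=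
  1 ≤ i ∧
  (∀ k, (b.f k : ℤ) = (a.f k : ℤ) + (if k = i - 1 then 2 else 0) -
      (if k = j then 1 else 0) + (if k = j + 1 then 1 else 0)) ∧
  (∀ k, (b.p k : ℤ) = (a.p k : ℤ) - (if k = i then 1 else 0))

/-- The operation FV(i,j): `f_i ← f_i - 2`, `p_i ← p_i + 1`, `f_j ← f_j - 1`,
`f_{j+1} ← f_{j+1} + 1`. -/
def IsFV (i j : ℕ) (a b : BSeq) : Prop :=
  (∀ k, (b.f k : ℤ) = (a.f k : ℤ) - (if k = i then 2 else 0) -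
      (if k = j then 1 else 0) + (if k = j + 1 then 1 else 0)) ∧
  (∀ k, (b.p k : ℤ) = (a.p k : ℤ) + (if k = i then 1 else 0))

/-- The operation FF(i,j): `f_i ← f_i - 1`, `f_{i+1} ← f_{i+1} + 1`, `f_j ← f_j - 1`,
`f_{j-1} ← f_{j-1} + 1`. -/
def IsFF (i j : ℕ) (a b : BSeq) : Prop :=
  1 ≤ j ∧
  (∀ k, (b.f k : ℤ) = (a.f k : ℤ) - (if k = i then 1 else 0) +
      (if k = i + 1 then 1 else 0) - (if k = j then 1 else 0) +
      (if k = j - 1 then 1 else 0)) ∧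
  (∀ k, b.p k = a.p k)

/-- The operation PV(i,j): `p_i ← p_i - 1`, `f_{i-1} ← f_{i-1} + 2`, `p_j ← p_j - 1`,
`f_j ← f_j + 2`. -/
def IsPV (i j : ℕ) (a b : BSeq) : Prop :=
  1 ≤ i ∧ 1 ≤ j ∧
  (∀ k, (b.f k : ℤ) = (a.f k : ℤ) + (if k = i - 1 then 2 else 0) +
      (if k = j then 2 else 0)) ∧
  (∀ k, (b.p k : ℤ) = (a.p k : ℤ) - (if k = i then 1 else 0) - (if k = j then 1 else 0))

/-- `a` and `b` are adjacent: both lie in `S(n,A)` and `b` is obtained from `a` by one of the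
four local operations (for some indices `i`, `j`) or one of their inverses. -/
def BAdj (n A : ℕ) (a b : BSeq) : Prop :=
  a ∈ Sset n A ∧ b ∈ Sset n A ∧
    ∃ i j, IsPF i j a b ∨ IsPF i j b a ∨ IsFV i j a b ∨ IsFV i j b a ∨
      IsFF i j a b ∨ IsFF i j b a ∨ IsPV i j a b ∨ IsPV i j b a

namespace BP
open Finset Relation

lemma bext {a b : BSeq} (hh : a.h = b.h) (hf : ∀ k, a.f k = b.f k)
    (hp : ∀ k, a.p k = b.p k) : a = b := by
  cases a; cases b
  simp only [BSeq.mk.injEq]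
  exact ⟨hh, funext hf, funext hp⟩

lemma sum_shift (s : Finset ℕ) (g : ℕ → ℤ) (t : ℕ) (c : ℤ) (ht : t ∈ s) :
    ∑ k ∈ s, (g k + if k = t then c else 0) = (∑ k ∈ s, g k) + c := by
  rw [Finset.sum_add_distrib, Finset.sum_ite_eq' s t (fun _ => c), if_pos ht]

lemma sum_ite_mul (s : Finset ℕ) (w : ℕ → ℤ) (t : ℕ) (c : ℤ) (ht : t ∈ s) :
    ∑ k ∈ s, (w k * if k = t then c else 0) = w t * c := by
  simp only [mul_ite, mul_zero]
  rw [Finset.sum_ite_eq' s t (fun k => w k * c), if_pos ht]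

lemma sq_sum (h : ℕ) : ∑ i ∈ Finset.Icc 1 h, (2 * i - 1) = h ^ 2 := by
  induction h with
  | zero => simp
  | succ m ih =>
      rw [Finset.sum_Icc_succ_top (by omega)]
      have : (m + 1) ^ 2 = m ^ 2 + 2 * m + 1 := by ring
      omega

/-- Peak reduction move PF(i, i-1). -/
def pr (a : BSeq) (i : ℕ) : BSeq :=
  ⟨a.h,
   fun k => a.f k + (if k = i - 1 then 1 else 0) + (if k = i then 1 else 0),
   fun k => a.p k - (if k = i then 1 else 0)⟩

lemma pr_spec {n A : ℕ} {a : BSeq} (ha : a ∈ Sset n A) (i : ℕ)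
    (hi1 : 1 ≤ i) (hih : i ≤ a.h) (hp2 : 2 ≤ a.p i) :
    pr a i ∈ Sset n A ∧ (pr a i).h = a.h ∧
      (∀ k, (pr a i).p k = a.p k - (if k = i then 1 else 0)) ∧
      IsPF i (i - 1) a (pr a i) := by
  obtain ⟨hpos, hp0, hpz, hfz, hn, hA⟩ := ha
  set b := pr a i with hb
  have hbf : ∀ k, ((b.f k : ℤ)) = (a.f k : ℤ) + (if k = i - 1 then 1 else 0)
      + (if k = i then 1 else 0) := by
    intro k; simp only [hb, pr]; split_ifs <;> push_cast <;> ring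
  have hbp : ∀ k, ((b.p k : ℤ)) = (a.p k : ℤ) - (if k = i then 1 else 0) := by
    intro k; simp only [hb, pr]; split_ifs with h1
    · subst h1; omega
    · simp
  have hm1 : i - 1 ∈ Finset.range (a.h + 1) := by simp; omega
  have hm2 : i ∈ Finset.range (a.h + 1) := by simp; omega
  have hm3 : i ∈ Finset.Icc 1 a.h := by simp; omega
  have hF : (∑ k ∈ Finset.range (a.h + 1), (b.f k : ℤ))
      = (∑ k ∈ Finset.range (a.h + 1), (a.f k : ℤ)) + 2 := by
    rw [Finset.sum_congr rfl (fun k _ => hbf k)]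
    rw [show (fun k => (a.f k : ℤ) + (if k = i - 1 then 1 else 0) + (if k = i then 1 else 0))
        = (fun k => ((a.f k : ℤ) + (if k = i - 1 then 1 else 0)) + (if k = i then 1 else 0)) from rfl]
    rw [sum_shift _ _ _ _ hm2, sum_shift _ _ _ _ hm1]; ring
  have hS : (∑ k ∈ Finset.range (a.h + 1), (k : ℤ) * (b.f k : ℤ))
      = (∑ k ∈ Finset.range (a.h + 1), (k : ℤ) * (a.f k : ℤ)) + (2 * (i : ℤ) - 1) := by
    have : ∀ k ∈ Finset.range (a.h + 1), (k : ℤ) * (b.f k : ℤ)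
        = (k : ℤ) * (a.f k : ℤ) + ((k : ℤ) * if k = i - 1 then 1 else 0)
          + ((k : ℤ) * if k = i then 1 else 0) := by
      intro k _; rw [hbf k]; ring
    rw [Finset.sum_congr rfl this, Finset.sum_add_distrib, Finset.sum_add_distrib,
      sum_ite_mul _ _ _ _ hm1, sum_ite_mul _ _ _ _ hm2]
    have : ((i - 1 : ℕ) : ℤ) = (i : ℤ) - 1 := by omega
    rw [this]; ring
  have hP : (∑ k ∈ Finset.Icc 1 a.h, (b.p k : ℤ))
      = (∑ k ∈ Finset.Icc 1 a.h, (a.p k : ℤ)) - 1 := by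
    have : ∀ k ∈ Finset.Icc 1 a.h, (b.p k : ℤ)
        = (a.p k : ℤ) + (if k = i then -1 else 0) := by
      intro k _; rw [hbp k]; split_ifs <;> ring
    rw [Finset.sum_congr rfl this, sum_shift _ _ _ _ hm3]; ring
  have hT : (∑ k ∈ Finset.Icc 1 a.h, ((2 * k - 1 : ℕ) : ℤ) * (b.p k : ℤ))
      = (∑ k ∈ Finset.Icc 1 a.h, ((2 * k - 1 : ℕ) : ℤ) * (a.p k : ℤ)) - (2 * (i : ℤ) - 1) := by
    have : ∀ k ∈ Finset.Icc 1 a.h, ((2 * k - 1 : ℕ) : ℤ) * (b.p k : ℤ)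
        = ((2 * k - 1 : ℕ) : ℤ) * (a.p k : ℤ)
          + (((2 * k - 1 : ℕ) : ℤ) * if k = i then -1 else 0) := by
      intro k _; rw [hbp k]; split_ifs <;> ring
    rw [Finset.sum_congr rfl this, Finset.sum_add_distrib, sum_ite_mul _ _ _ _ hm3]
    have : ((2 * i - 1 : ℕ) : ℤ) = 2 * (i : ℤ) - 1 := by omega
    rw [this]; ring
  have hbh : b.h = a.h := rfl
  refine ⟨⟨?_, ?_, ?_, ?_, ?_, ?_⟩, rfl, fun k => rfl, ?_⟩
  · intro k hk1 hk2
    rw [hbh] at hk2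
    have := hpos k hk1 hk2
    show 0 < a.p k - _
    split_ifs with h1
    · subst h1; omega
    · omega
  · show a.p 0 - _ = 0
    rw [if_neg (by omega : ¬ (0 = i))]
    omega
  · intro k hk; rw [hbh] at hk
    show a.p k - _ = 0
    rw [hpz k hk]; omega
  · intro k hk; rw [hbh] at hk
    show a.f k + _ + _ = 0
    rw [hfz k hk, if_neg (by omega : ¬ (k = i - 1)), if_neg (by omega : ¬ (k = i))]
  · -- width
    rw [hbh]
    have h1 : ((∑ k ∈ Finset.range (a.h + 1), b.f k : ℕ) : ℤ)
        = ((∑ k ∈ Finset.range (a.h + 1), a.f k : ℕ) : ℤ) + 2 := by push_cast; exact hF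
    have h2 : ((∑ k ∈ Finset.Icc 1 a.h, b.p k : ℕ) : ℤ)
        = ((∑ k ∈ Finset.Icc 1 a.h, a.p k : ℕ) : ℤ) - 1 := by push_cast; exact hP
    omega
  · -- area
    rw [hbh]
    have h1 : ((∑ k ∈ Finset.range (a.h + 1), k * b.f k : ℕ) : ℤ)
        = ((∑ k ∈ Finset.range (a.h + 1), k * a.f k : ℕ) : ℤ) + (2 * (i : ℤ) - 1) := by
      push_cast; exact hS
    have h2 : ((∑ k ∈ Finset.Icc 1 a.h, (2 * k - 1) * b.p k : ℕ) : ℤ)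
        = ((∑ k ∈ Finset.Icc 1 a.h, (2 * k - 1) * a.p k : ℕ) : ℤ) - (2 * (i : ℤ) - 1) := by
      push_cast [Nat.cast_sub]; exact hT
    omega
  · -- IsPF
    refine ⟨hi1, ?_, hbp⟩
    intro k
    rw [hbf k]
    have hii : i - 1 + 1 = i := by omega
    rw [hii]
    split_ifs <;> ring

/-- FF move: raise a flat from i to i+1, lower a flat from j to j-1. -/
def ffm (a : BSeq) (i j : ℕ) : BSeq :=
  ⟨a.h,
   fun k => (a.f k + (if k = i + 1 then 1 else 0) + (if k = j - 1 then 1 else 0))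
            - ((if k = i then 1 else 0) + (if k = j then 1 else 0)),
   a.p⟩

lemma ffm_spec {n A : ℕ} {a : BSeq} (ha : a ∈ Sset n A) (i j : ℕ)
    (hj1 : 1 ≤ j) (hih : i + 1 ≤ a.h) (hjh : j ≤ a.h)
    (hfi : 1 ≤ a.f i) (hfj : 1 ≤ a.f j) (hij : i ≠ j ∨ 2 ≤ a.f i) :
    ffm a i j ∈ Sset n A ∧ (ffm a i j).h = a.h ∧ (∀ k, (ffm a i j).p k = a.p k) ∧
      (∀ k, ((ffm a i j).f k : ℤ) = (a.f k : ℤ) - (if k = i then 1 else 0) +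
        (if k = i + 1 then 1 else 0) - (if k = j then 1 else 0) +
        (if k = j - 1 then 1 else 0)) ∧
      IsFF i j a (ffm a i j) := by
  obtain ⟨hpos, hp0, hpz, hfz, hn, hA⟩ := ha
  set b := ffm a i j with hb
  have hbf : ∀ k, ((b.f k : ℤ)) = (a.f k : ℤ) - (if k = i then 1 else 0) +
      (if k = i + 1 then 1 else 0) - (if k = j then 1 else 0) +
      (if k = j - 1 then 1 else 0) := by
    intro k
    rcases hij with hij | hij
    · by_cases h1 : k = i
      · subst h1; simp only [hb, ffm]; split_ifs <;> omega
      · by_cases h2 : k = j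
        · subst h2; simp only [hb, ffm]; split_ifs <;> omega
        · simp only [hb, ffm]; split_ifs <;> omega
    · by_cases h1 : k = i
      · subst h1; simp only [hb, ffm]; split_ifs <;> omega
      · by_cases h2 : k = j
        · subst h2; simp only [hb, ffm]; split_ifs <;> omega
        · simp only [hb, ffm]; split_ifs <;> omega
  have hm1 : i ∈ Finset.range (a.h + 1) := by simp; omega
  have hm2 : i + 1 ∈ Finset.range (a.h + 1) := by simp; omega
  have hm3 : j ∈ Finset.range (a.h + 1) := by simp; omega
  have hm4 : j - 1 ∈ Finset.range (a.h + 1) := by simp; omega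
  have hF : (∑ k ∈ Finset.range (a.h + 1), (b.f k : ℤ))
      = (∑ k ∈ Finset.range (a.h + 1), (a.f k : ℤ)) := by
    have : ∀ k ∈ Finset.range (a.h + 1), (b.f k : ℤ)
        = (((((a.f k : ℤ) + (if k = i then -1 else 0)) + (if k = i + 1 then 1 else 0))
          + (if k = j then -1 else 0)) + (if k = j - 1 then 1 else 0)) := by
      intro k _; rw [hbf k]; split_ifs <;> ring
    rw [Finset.sum_congr rfl this, sum_shift _ _ _ _ hm4, sum_shift _ _ _ _ hm3,
      sum_shift _ _ _ _ hm2, sum_shift _ _ _ _ hm1]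
    ring
  have hS : (∑ k ∈ Finset.range (a.h + 1), (k : ℤ) * (b.f k : ℤ))
      = (∑ k ∈ Finset.range (a.h + 1), (k : ℤ) * (a.f k : ℤ)) := by
    have : ∀ k ∈ Finset.range (a.h + 1), (k : ℤ) * (b.f k : ℤ)
        = (k : ℤ) * (a.f k : ℤ) + ((k : ℤ) * if k = i then -1 else 0)
          + ((k : ℤ) * if k = i + 1 then 1 else 0)
          + ((k : ℤ) * if k = j then -1 else 0)
          + ((k : ℤ) * if k = j - 1 then 1 else 0) := by
      intro k _; rw [hbf k]; split_ifs <;> ring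
    rw [Finset.sum_congr rfl this, Finset.sum_add_distrib, Finset.sum_add_distrib,
      Finset.sum_add_distrib, Finset.sum_add_distrib,
      sum_ite_mul _ _ _ _ hm1, sum_ite_mul _ _ _ _ hm2, sum_ite_mul _ _ _ _ hm3,
      sum_ite_mul _ _ _ _ hm4]
    have hj' : ((j - 1 : ℕ) : ℤ) = (j : ℤ) - 1 := by omega
    rw [hj']; push_cast; ring
  refine ⟨⟨?_, ?_, ?_, ?_, ?_, ?_⟩, rfl, fun k => rfl, hbf, hj1, hbf, fun k => rfl⟩
  · intro k hk1 hk2; exact hpos k hk1 hk2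
  · exact hp0
  · intro k hk; exact hpz k hk
  · intro k hk
    replace hk : a.h < k := hk
    have h1 := hfz k hk
    have : (b.f k : ℤ) = 0 := by
      rw [hbf k, h1, if_neg (by omega : ¬ (k = i)), if_neg (by omega : ¬ (k = i + 1)),
        if_neg (by omega : ¬ (k = j)), if_neg (by omega : ¬ (k = j - 1))]
      simp
    omega
  · have h1 : ((∑ k ∈ Finset.range (a.h + 1), b.f k : ℕ) : ℤ)
        = ((∑ k ∈ Finset.range (a.h + 1), a.f k : ℕ) : ℤ) := by push_cast; exact hF
    show (∑ k ∈ Finset.range (a.h + 1), b.f k) + 2 * (∑ k ∈ Finset.Icc 1 a.h, a.p k) = n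
    omega
  · have h1 : ((∑ k ∈ Finset.range (a.h + 1), k * b.f k : ℕ) : ℤ)
        = ((∑ k ∈ Finset.range (a.h + 1), k * a.f k : ℕ) : ℤ) := by push_cast; exact hS
    show (∑ k ∈ Finset.range (a.h + 1), k * b.f k)
        + (∑ k ∈ Finset.Icc 1 a.h, (2 * k - 1) * a.p k) = A
    omega

/-- Height reduction move PF(a.h, j), assuming p_h = 1, f_h = 0, j+2 ≤ h, f_j ≥ 1. -/
def hrm (a : BSeq) (j : ℕ) : BSeq :=
  ⟨a.h - 1,
   fun k => (a.f k + (if k = a.h - 1 then 2 else 0) + (if k = j + 1 then 1 else 0))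
            - (if k = j then 1 else 0),
   fun k => a.p k - (if k = a.h then 1 else 0)⟩

lemma hrm_spec {n A : ℕ} {a : BSeq} (ha : a ∈ Sset n A) (j : ℕ)
    (h2 : 2 ≤ a.h) (hph : a.p a.h = 1) (hfh : a.f a.h = 0)
    (hj : j + 2 ≤ a.h) (hfj : 1 ≤ a.f j) :
    hrm a j ∈ Sset n A ∧ (hrm a j).h = a.h - 1 ∧
      (∀ k, (hrm a j).p k = a.p k - (if k = a.h then 1 else 0)) ∧
      IsPF a.h j a (hrm a j) := by
  obtain ⟨hpos, hp0, hpz, hfz, hn, hA⟩ := ha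
  set b := hrm a j with hb
  have hph1 : 0 < a.p a.h := by omega
  have hbf : ∀ k, ((b.f k : ℤ)) = (a.f k : ℤ) + (if k = a.h - 1 then 2 else 0)
      - (if k = j then 1 else 0) + (if k = j + 1 then 1 else 0) := by
    intro k
    by_cases h1 : k = j
    · subst h1; simp only [hb, hrm]; split_ifs <;> omega
    · simp only [hb, hrm]; split_ifs <;> omega
  have hbp : ∀ k, ((b.p k : ℤ)) = (a.p k : ℤ) - (if k = a.h then 1 else 0) := by
    intro k
    by_cases h1 : k = a.h
    · subst h1; simp only [hb, hrm]; split_ifs <;> omega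
    · simp only [hb, hrm]; split_ifs <;> omega
  have hm1 : a.h - 1 ∈ Finset.range a.h := by simp; omega
  have hm2 : j ∈ Finset.range a.h := by simp; omega
  have hm3 : j + 1 ∈ Finset.range a.h := by simp; omega
  -- sums of a over range a.h versus range (a.h + 1)
  have haF : (∑ k ∈ Finset.range (a.h + 1), (a.f k : ℤ))
      = ∑ k ∈ Finset.range a.h, (a.f k : ℤ) := by
    rw [Finset.sum_range_succ, hfh]; simp
  have haS : (∑ k ∈ Finset.range (a.h + 1), (k : ℤ) * (a.f k : ℤ))
      = ∑ k ∈ Finset.range a.h, (k : ℤ) * (a.f k : ℤ) := by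
    rw [Finset.sum_range_succ, hfh]; simp
  have hF : (∑ k ∈ Finset.range a.h, (b.f k : ℤ))
      = (∑ k ∈ Finset.range (a.h + 1), (a.f k : ℤ)) + 2 := by
    rw [haF]
    have : ∀ k ∈ Finset.range a.h, (b.f k : ℤ)
        = ((((a.f k : ℤ) + (if k = a.h - 1 then 2 else 0)) + (if k = j then -1 else 0))
          + (if k = j + 1 then 1 else 0)) := by
      intro k _; rw [hbf k]; split_ifs <;> ring
    rw [Finset.sum_congr rfl this, sum_shift _ _ _ _ hm3, sum_shift _ _ _ _ hm2,
      sum_shift _ _ _ _ hm1]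
    ring
  have hS : (∑ k ∈ Finset.range a.h, (k : ℤ) * (b.f k : ℤ))
      = (∑ k ∈ Finset.range (a.h + 1), (k : ℤ) * (a.f k : ℤ)) + (2 * (a.h : ℤ) - 1) := by
    rw [haS]
    have : ∀ k ∈ Finset.range a.h, (k : ℤ) * (b.f k : ℤ)
        = (k : ℤ) * (a.f k : ℤ) + ((k : ℤ) * if k = a.h - 1 then 2 else 0)
          + ((k : ℤ) * if k = j then -1 else 0)
          + ((k : ℤ) * if k = j + 1 then 1 else 0) := by
      intro k _; rw [hbf k]; split_ifs <;> ring
    rw [Finset.sum_congr rfl this, Finset.sum_add_distrib, Finset.sum_add_distrib,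
      Finset.sum_add_distrib,
      sum_ite_mul _ _ _ _ hm1, sum_ite_mul _ _ _ _ hm2, sum_ite_mul _ _ _ _ hm3]
    have : ((a.h - 1 : ℕ) : ℤ) = (a.h : ℤ) - 1 := by omega
    rw [this]; push_cast; ring
  have hicc : Finset.Icc 1 a.h = insert a.h (Finset.Icc 1 (a.h - 1)) := by
    ext x; simp only [Finset.mem_Icc, Finset.mem_insert]; omega
  have hnotmem : a.h ∉ Finset.Icc 1 (a.h - 1) := by simp; omega
  have hP : (∑ k ∈ Finset.Icc 1 (a.h - 1), (b.p k : ℤ))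
      = (∑ k ∈ Finset.Icc 1 a.h, (a.p k : ℤ)) - 1 := by
    rw [hicc, Finset.sum_insert hnotmem, hph]
    have : ∀ k ∈ Finset.Icc 1 (a.h - 1), (b.p k : ℤ) = (a.p k : ℤ) := by
      intro k hk; simp at hk; rw [hbp k, if_neg (by omega)]; ring
    rw [Finset.sum_congr rfl this]; push_cast; ring
  have hT : (∑ k ∈ Finset.Icc 1 (a.h - 1), ((2 * k - 1 : ℕ) : ℤ) * (b.p k : ℤ))
      = (∑ k ∈ Finset.Icc 1 a.h, ((2 * k - 1 : ℕ) : ℤ) * (a.p k : ℤ))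
        - (2 * (a.h : ℤ) - 1) := by
    rw [hicc, Finset.sum_insert hnotmem, hph]
    have : ∀ k ∈ Finset.Icc 1 (a.h - 1), ((2 * k - 1 : ℕ) : ℤ) * (b.p k : ℤ)
        = ((2 * k - 1 : ℕ) : ℤ) * (a.p k : ℤ) := by
      intro k hk; simp at hk; rw [hbp k, if_neg (by omega)]; ring
    rw [Finset.sum_congr rfl this]
    have : ((2 * a.h - 1 : ℕ) : ℤ) = 2 * (a.h : ℤ) - 1 := by omega
    rw [this]; push_cast; ring
  refine ⟨⟨?_, ?_, ?_, ?_, ?_, ?_⟩, rfl, fun k => rfl, ?_⟩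
  · intro k hk1 hk2
    replace hk2 : k ≤ a.h - 1 := hk2
    have := hpos k hk1 (by omega)
    show a.p k - _ > 0
    rw [if_neg (by omega : ¬ (k = a.h))]; omega
  · show a.p 0 - _ = 0
    rw [if_neg (by omega : ¬ (0 = a.h))]; omega
  · intro k hk
    replace hk : a.h - 1 < k := hk
    show a.p k - _ = 0
    by_cases h1 : k = a.h
    · rw [if_pos h1, h1, hph]
    · rw [hpz k (by omega)]; omega
  · intro k hk
    replace hk : a.h - 1 < k := hk
    show a.f k + _ + _ - _ = 0
    by_cases h1 : k = a.h
    · rw [if_neg (by omega : ¬ (k = a.h - 1)), if_neg (by omega : ¬ (k = j + 1)),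
        if_neg (by omega : ¬ (k = j)), h1, hfh]
    · rw [hfz k (by omega), if_neg (by omega : ¬ (k = a.h - 1)),
        if_neg (by omega : ¬ (k = j + 1)), if_neg (by omega : ¬ (k = j))]
  · show (∑ k ∈ Finset.range (a.h - 1 + 1), b.f k)
        + 2 * (∑ k ∈ Finset.Icc 1 (a.h - 1), b.p k) = n
    rw [show a.h - 1 + 1 = a.h from by omega]
    have h1 : ((∑ k ∈ Finset.range a.h, b.f k : ℕ) : ℤ)
        = ((∑ k ∈ Finset.range (a.h + 1), a.f k : ℕ) : ℤ) + 2 := by push_cast; exact hF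
    have h2 : ((∑ k ∈ Finset.Icc 1 (a.h - 1), b.p k : ℕ) : ℤ)
        = ((∑ k ∈ Finset.Icc 1 a.h, a.p k : ℕ) : ℤ) - 1 := by push_cast; exact hP
    omega
  · show (∑ k ∈ Finset.range (a.h - 1 + 1), k * b.f k)
        + (∑ k ∈ Finset.Icc 1 (a.h - 1), (2 * k - 1) * b.p k) = A
    rw [show a.h - 1 + 1 = a.h from by omega]
    have h1 : ((∑ k ∈ Finset.range a.h, k * b.f k : ℕ) : ℤ)
        = ((∑ k ∈ Finset.range (a.h + 1), k * a.f k : ℕ) : ℤ) + (2 * (a.h : ℤ) - 1) := by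
      push_cast; exact hS
    have h2 : ((∑ k ∈ Finset.Icc 1 (a.h - 1), (2 * k - 1) * b.p k : ℕ) : ℤ)
        = ((∑ k ∈ Finset.Icc 1 a.h, (2 * k - 1) * a.p k : ℕ) : ℤ)
          - (2 * (a.h : ℤ) - 1) := by
      push_cast [Nat.cast_sub]; exact hT
    omega
  · exact ⟨by omega, hbf, hbp⟩

def cdiff (a b : BSeq) (k : ℕ) : ℤ := ∑ t ∈ Finset.range (k + 1), ((a.f t : ℤ) - (b.f t : ℤ))

lemma sum_prefix (d : ℕ → ℤ) (m : ℕ) :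
    ∑ k ∈ Finset.range m, ∑ t ∈ Finset.range (k + 1), d t
      = ∑ t ∈ Finset.range m, ((m : ℤ) - t) * d t := by
  induction m with
  | zero => simp
  | succ m ih =>
      rw [Finset.sum_range_succ, ih,
        Finset.sum_range_succ (fun t => (((m + 1 : ℕ) : ℤ) - (t : ℤ)) * d t) m]
      have h1 : ∀ t ∈ Finset.range m, (((m + 1 : ℕ) : ℤ) - (t : ℤ)) * d t
          = ((m : ℤ) - t) * d t + d t := by
        intro t _; push_cast; ring
      rw [Finset.sum_congr rfl h1, Finset.sum_add_distrib,
        Finset.sum_range_succ (fun t => d t) m]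
      push_cast; ring

lemma ff_facts {n A : ℕ} {a b : BSeq} (ha : a ∈ Sset n A) (hb : b ∈ Sset n A)
    (hh : b.h = a.h) (hp : ∀ k, b.p k = a.p k) :
    (∀ m, a.h ≤ m → cdiff a b m = 0) ∧ (∑ k ∈ Finset.range a.h, cdiff a b k = 0) := by
  obtain ⟨_, _, _, hfza, hna, hAa⟩ := ha
  obtain ⟨_, _, _, hfzb, hnb, hAb⟩ := hb
  rw [hh] at hfzb hnb hAb
  have hpp : (∑ k ∈ Finset.Icc 1 a.h, b.p k) = ∑ k ∈ Finset.Icc 1 a.h, a.p k :=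
    Finset.sum_congr rfl (fun k _ => hp k)
  have hTT : (∑ k ∈ Finset.Icc 1 a.h, (2 * k - 1) * b.p k)
      = ∑ k ∈ Finset.Icc 1 a.h, (2 * k - 1) * a.p k :=
    Finset.sum_congr rfl (fun k _ => by rw [hp k])
  have hFab : (∑ t ∈ Finset.range (a.h + 1), b.f t) = ∑ t ∈ Finset.range (a.h + 1), a.f t := by
    omega
  have hSab : (∑ t ∈ Finset.range (a.h + 1), t * b.f t)
      = ∑ t ∈ Finset.range (a.h + 1), t * a.f t := by omega
  have hd0 : ∑ t ∈ Finset.range (a.h + 1), ((a.f t : ℤ) - (b.f t : ℤ)) = 0 := by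
    rw [Finset.sum_sub_distrib]
    have h' : ((∑ t ∈ Finset.range (a.h + 1), a.f t : ℕ) : ℤ)
        = ((∑ t ∈ Finset.range (a.h + 1), b.f t : ℕ) : ℤ) := by exact_mod_cast hFab.symm
    push_cast at h'
    omega
  have hSd : ∑ t ∈ Finset.range (a.h + 1), (t : ℤ) * ((a.f t : ℤ) - (b.f t : ℤ)) = 0 := by
    have e : ∀ t ∈ Finset.range (a.h + 1), (t : ℤ) * ((a.f t : ℤ) - (b.f t : ℤ))
        = (t : ℤ) * (a.f t : ℤ) - (t : ℤ) * (b.f t : ℤ) := by intro t _; ring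
    rw [Finset.sum_congr rfl e, Finset.sum_sub_distrib]
    have h' : ((∑ t ∈ Finset.range (a.h + 1), t * a.f t : ℕ) : ℤ)
        = ((∑ t ∈ Finset.range (a.h + 1), t * b.f t : ℕ) : ℤ) := by exact_mod_cast hSab.symm
    push_cast at h'
    omega
  have fact1 : ∀ m, a.h ≤ m → cdiff a b m = 0 := by
    intro m hm
    have hsub : (∑ t ∈ Finset.range (a.h + 1), ((a.f t : ℤ) - (b.f t : ℤ)))
        = ∑ t ∈ Finset.range (m + 1), ((a.f t : ℤ) - (b.f t : ℤ)) := by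
      apply Finset.sum_subset (Finset.range_subset_range.2 (by omega))
      intro t ht hts
      simp only [Finset.mem_range] at ht hts
      rw [hfza t (by omega), hfzb t (by omega)]
      simp
    unfold cdiff
    rw [← hsub]
    exact hd0
  refine ⟨fact1, ?_⟩
  have h1 : (∑ k ∈ Finset.range a.h, cdiff a b k)
      = ∑ t ∈ Finset.range a.h, ((a.h : ℤ) - t) * ((a.f t : ℤ) - (b.f t : ℤ)) :=
    sum_prefix _ _
  have h2 : (∑ t ∈ Finset.range (a.h + 1), ((a.h : ℤ) - t) * ((a.f t : ℤ) - (b.f t : ℤ)))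
      = ∑ t ∈ Finset.range a.h, ((a.h : ℤ) - t) * ((a.f t : ℤ) - (b.f t : ℤ)) := by
    rw [Finset.sum_range_succ]
    simp
  have h3 : (∑ t ∈ Finset.range (a.h + 1), ((a.h : ℤ) - t) * ((a.f t : ℤ) - (b.f t : ℤ))) = 0 := by
    have e : ∀ t ∈ Finset.range (a.h + 1), ((a.h : ℤ) - t) * ((a.f t : ℤ) - (b.f t : ℤ))
        = (a.h : ℤ) * ((a.f t : ℤ) - (b.f t : ℤ)) - (t : ℤ) * ((a.f t : ℤ) - (b.f t : ℤ)) := by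
      intro t _; ring
    rw [Finset.sum_congr rfl e, Finset.sum_sub_distrib, ← Finset.mul_sum, hd0, hSd]
    ring
  rw [h1, ← h2, h3]

lemma ff_eq {n A : ℕ} {a b : BSeq} (ha : a ∈ Sset n A) (hb : b ∈ Sset n A)
    (hh : b.h = a.h) (hp : ∀ k, b.p k = a.p k)
    (hc : ∀ k ∈ Finset.range a.h, cdiff a b k = 0) : a = b := by
  have fact1 := (ff_facts ha hb hh hp).1
  have hall : ∀ k, cdiff a b k = 0 := by
    intro k
    by_cases hk : k < a.h
    · exact hc k (Finset.mem_range.2 hk)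
    · exact fact1 k (by omega)
  have hf : ∀ t, a.f t = b.f t := by
    intro t
    cases t with
    | zero =>
        have h0 := hall 0
        unfold cdiff at h0
        rw [Finset.sum_range_one] at h0
        omega
    | succ m =>
        have h1 := hall (m + 1)
        have h2 := hall m
        unfold cdiff at h1 h2
        rw [Finset.sum_range_succ] at h1
        have : (∑ t ∈ Finset.range (m + 1), ((a.f t : ℤ) - (b.f t : ℤ)))
            + ((a.f (m + 1) : ℤ) - (b.f (m + 1) : ℤ)) = 0 := h1
        omega
  exact bext hh.symm hf (fun k => (hp k).symm)

lemma ff_step {n A : ℕ} {a b : BSeq} (ha : a ∈ Sset n A) (hb : b ∈ Sset n A)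
    (hh : b.h = a.h) (hp : ∀ k, b.p k = a.p k)
    (hex : ∃ k, k < a.h ∧ cdiff a b k ≠ 0) :
    ∃ a', a' ∈ Sset n A ∧ BAdj n A a a' ∧ a'.h = a.h ∧ (∀ k, a'.p k = a.p k) ∧
      (∑ t ∈ Finset.range a.h, |cdiff a b t|)
        = (∑ t ∈ Finset.range a.h, |cdiff a' b t|) + 2 := by
  obtain ⟨fact1, fact2⟩ := ff_facts ha hb hh hp
  have hposex : ∃ m, 0 < cdiff a b m := by
    by_contra hcon
    push_neg at hcon
    have hz := (Finset.sum_eq_zero_iff_of_nonpos (fun k _ => hcon k)).1 fact2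
    obtain ⟨k, hk1, hk2⟩ := hex
    exact hk2 (hz k (Finset.mem_range.2 hk1))
  have hnegex : ∃ m, m ≤ a.h ∧ cdiff a b m < 0 := by
    by_contra hcon
    push_neg at hcon
    have hnn : ∀ k ∈ Finset.range a.h, 0 ≤ cdiff a b k := by
      intro k hk
      simp only [Finset.mem_range] at hk
      exact hcon k (by omega)
    have hz := (Finset.sum_eq_zero_iff_of_nonneg hnn).1 fact2
    obtain ⟨k, hk1, hk2⟩ := hex
    exact hk2 (hz k (Finset.mem_range.2 hk1))
  classical
  set i := Nat.find hposex with hidef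
  have hci : 0 < cdiff a b i := Nat.find_spec hposex
  have himin : ∀ m, m < i → ¬ 0 < cdiff a b m := fun m hm => Nat.find_min hposex hm
  have hih : i < a.h := by
    by_contra hcc
    push_neg at hcc
    rw [fact1 i hcc] at hci
    omega
  obtain ⟨m0, hm0h, hm0⟩ := hnegex
  set k := Nat.findGreatest (fun m => cdiff a b m < 0) a.h with hkdef
  have hck : cdiff a b k < 0 := by
    rw [hkdef]; exact Nat.findGreatest_spec (P := fun m => cdiff a b m < 0) hm0h hm0
  have hkle : k ≤ a.h := by
    rw [hkdef]; exact Nat.findGreatest_le a.h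
  have hkh : k < a.h := by
    rcases Nat.lt_or_ge k a.h with h | h
    · exact h
    · have : k = a.h := by omega
      rw [this, fact1 a.h (le_refl _)] at hck
      omega
  have hck1 : 0 ≤ cdiff a b (k + 1) := by
    have hgr : ¬ (cdiff a b (k + 1) < 0) := by
      have := Nat.findGreatest_is_greatest (P := fun m => cdiff a b m < 0)
        (by omega : Nat.findGreatest (fun m => cdiff a b m < 0) a.h < k + 1)
        (by omega : k + 1 ≤ a.h)
      exact this
    omega
  have hik : i ≠ k := by
    intro e
    rw [e] at hci
    omega
  have hstep : ∀ t, cdiff a b (t + 1) = cdiff a b t + ((a.f (t + 1) : ℤ) - (b.f (t + 1) : ℤ)) := by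
    intro t
    unfold cdiff
    rw [Finset.sum_range_succ]
  have hzero : cdiff a b 0 = (a.f 0 : ℤ) - (b.f 0 : ℤ) := by
    unfold cdiff; rw [Finset.sum_range_one]
  have hfi : 1 ≤ a.f i := by
    rcases Nat.eq_zero_or_pos i with h0 | h0
    · rw [h0]
      rw [h0, hzero] at hci
      omega
    · have e : i - 1 + 1 = i := by omega
      have h1 := hstep (i - 1)
      rw [e] at h1
      have h2 := himin (i - 1) (by omega)
      omega
  have hfj : 1 ≤ a.f (k + 1) := by
    have h1 := hstep k
    omega
  have hij2 : i ≠ k + 1 ∨ 2 ≤ a.f i := by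
    by_cases e : i = k + 1
    · right
      have h1 := hstep k
      rw [← e] at h1
      omega
    · left; exact e
  obtain ⟨ha', hh', hp', hbf', hisff⟩ :=
    ffm_spec ⟨(ha : a ∈ Sset n A).1, ha.2.1, ha.2.2.1, ha.2.2.2.1, ha.2.2.2.2.1, ha.2.2.2.2.2⟩
      i (k + 1) (by omega) (by omega) (by omega) hfi hfj hij2
  simp only [Nat.add_sub_cancel] at hbf'
  set a' := ffm a i (k + 1) with ha'def
  have hc' : ∀ t, cdiff a' b t
      = cdiff a b t + (if t = i then -1 else 0) + (if t = k then 1 else 0) := by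
    intro t
    have h1 : cdiff a' b t - cdiff a b t = ∑ s ∈ Finset.range (t + 1), ((a'.f s : ℤ) - (a.f s : ℤ)) := by
      unfold cdiff
      rw [← Finset.sum_sub_distrib]
      apply Finset.sum_congr rfl
      intro s _
      ring
    have h2 : (∑ s ∈ Finset.range (t + 1), ((a'.f s : ℤ) - (a.f s : ℤ)))
        = (((if i ∈ Finset.range (t + 1) then (-1 : ℤ) else 0)
          + (if i + 1 ∈ Finset.range (t + 1) then (1 : ℤ) else 0))
          + (if k + 1 ∈ Finset.range (t + 1) then (-1 : ℤ) else 0))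
          + (if k ∈ Finset.range (t + 1) then (1 : ℤ) else 0) := by
      have e : ∀ s ∈ Finset.range (t + 1), (a'.f s : ℤ) - (a.f s : ℤ)
          = (((if s = i then (-1 : ℤ) else 0) + (if s = i + 1 then (1 : ℤ) else 0))
            + (if s = k + 1 then (-1 : ℤ) else 0)) + (if s = k then (1 : ℤ) else 0) := by
        intro s _
        rw [hbf' s]
        split_ifs <;> ring
      rw [Finset.sum_congr rfl e, Finset.sum_add_distrib, Finset.sum_add_distrib,
        Finset.sum_add_distrib, Finset.sum_ite_eq', Finset.sum_ite_eq', Finset.sum_ite_eq',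
        Finset.sum_ite_eq']
    rw [h2] at h1
    simp only [Finset.mem_range] at h1
    split_ifs at h1 ⊢ <;> omega
  have e1 : cdiff a' b i = cdiff a b i - 1 := by
    have := hc' i
    rw [if_pos rfl, if_neg hik] at this
    omega
  have e2 : cdiff a' b k = cdiff a b k + 1 := by
    have := hc' k
    rw [if_neg (Ne.symm hik), if_pos rfl] at this
    omega
  have e3 : ∀ t, t ≠ i → t ≠ k → cdiff a' b t = cdiff a b t := by
    intro t h1 h2
    have := hc' t
    rw [if_neg h1, if_neg h2] at this
    omega
  have habs : ∀ t ∈ Finset.range a.h, |cdiff a b t|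
      = (|cdiff a' b t| + (if t = i then (1 : ℤ) else 0)) + (if t = k then (1 : ℤ) else 0) := by
    intro t _
    by_cases h1 : t = i
    · subst h1
      rw [if_pos rfl, if_neg hik, e1, abs_of_pos hci, abs_of_nonneg (by omega)]
      ring
    · by_cases h2 : t = k
      · subst h2
        rw [if_neg h1, if_pos rfl, e2, abs_of_neg hck, abs_of_nonpos (by omega)]
        ring
      · rw [e3 t h1 h2, if_neg h1, if_neg h2]
        ring
  have hmi : i ∈ Finset.range a.h := Finset.mem_range.2 hih
  have hmk : k ∈ Finset.range a.h := Finset.mem_range.2 hkh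
  have hsum : (∑ t ∈ Finset.range a.h, |cdiff a b t|)
      = (∑ t ∈ Finset.range a.h, |cdiff a' b t|) + 2 := by
    rw [Finset.sum_congr rfl habs, sum_shift _ _ _ _ hmk, sum_shift _ _ _ _ hmi]
    ring
  exact ⟨a', ha', ⟨by exact ⟨ha.1, ha.2.1, ha.2.2.1, ha.2.2.2.1, ha.2.2.2.2.1, ha.2.2.2.2.2⟩,
    ha', i, k + 1, Or.inr (Or.inr (Or.inr (Or.inr (Or.inl hisff))))⟩, hh', hp', hsum⟩

lemma ffconn {n A : ℕ} (W : ℕ) :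
    ∀ (a b : BSeq), a ∈ Sset n A → b ∈ Sset n A → b.h = a.h → (∀ k, b.p k = a.p k) →
    (∑ t ∈ Finset.range a.h, |cdiff a b t|) ≤ (W : ℤ) →
    Relation.ReflTransGen (BAdj n A) a b := by
  induction W with
  | zero =>
      intro a b ha hb hh hp hW
      have hz : ∀ t ∈ Finset.range a.h, |cdiff a b t| = 0 := by
        intro t ht
        have h1 : ∀ t ∈ Finset.range a.h, 0 ≤ |cdiff a b t| := fun t _ => abs_nonneg _
        have h2 : (∑ t ∈ Finset.range a.h, |cdiff a b t|) = 0 := by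
          have := Finset.sum_nonneg h1
          omega
        exact (Finset.sum_eq_zero_iff_of_nonneg h1).1 h2 t ht
      have : a = b := ff_eq ha hb hh hp (fun t ht => abs_eq_zero.1 (hz t ht))
      rw [this]
  | succ W ih =>
      intro a b ha hb hh hp hW
      by_cases hz : ∀ k ∈ Finset.range a.h, cdiff a b k = 0
      · rw [ff_eq ha hb hh hp hz]
      · push_neg at hz
        obtain ⟨k0, hk0, hk0'⟩ := hz
        obtain ⟨a', ha', hadj, hh', hp', hsum⟩ :=
          ff_step ha hb hh hp ⟨k0, Finset.mem_range.1 hk0, hk0'⟩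
        have hW' : (∑ t ∈ Finset.range a'.h, |cdiff a' b t|) ≤ (W : ℤ) := by
          rw [hh']
          have : (0 : ℤ) ≤ ∑ t ∈ Finset.range a.h, |cdiff a' b t| :=
            Finset.sum_nonneg (fun t _ => abs_nonneg _)
          push_cast at hW ⊢
          omega
        exact Relation.ReflTransGen.head hadj
          (ih a' b ha' hb (by rw [hh, hh']) (fun k => by rw [hp k, hp' k]) hW')

lemma sum_shiftN (s : Finset ℕ) (g : ℕ → ℕ) (t : ℕ) (c : ℕ) (ht : t ∈ s) :
    ∑ k ∈ s, (g k + if k = t then c else 0) = (∑ k ∈ s, g k) + c := by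
  rw [Finset.sum_add_distrib, Finset.sum_ite_eq' s t (fun _ => c), if_pos ht]

lemma sum_ite_mulN (s : Finset ℕ) (w : ℕ → ℕ) (t : ℕ) (c : ℕ) (ht : t ∈ s) :
    ∑ k ∈ s, (w k * if k = t then c else 0) = w t * c := by
  simp only [mul_ite, mul_zero]
  rw [Finset.sum_ite_eq' s t (fun k => w k * c), if_pos ht]

lemma peaknorm {n A : ℕ} (P : ℕ) : ∀ a, a ∈ Sset n A →
    (∑ i ∈ Finset.Icc 1 a.h, a.p i) ≤ P →
    ∃ a', a' ∈ Sset n A ∧ a'.h = a.h ∧ (∀ i, 1 ≤ i → i ≤ a'.h → a'.p i = 1) ∧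
      Relation.ReflTransGen (BAdj n A) a a' := by
  induction P with
  | zero =>
      intro a ha hP
      refine ⟨a, ha, rfl, ?_, Relation.ReflTransGen.refl⟩
      intro i hi1 hi2
      have h1 := ha.1 i hi1 hi2
      have h2 : a.p i ≤ ∑ t ∈ Finset.Icc 1 a.h, a.p t :=
        Finset.single_le_sum (fun t _ => Nat.zero_le _) (Finset.mem_Icc.2 ⟨hi1, hi2⟩)
      omega
  | succ P ih =>
      intro a ha hP
      by_cases hex : ∃ i, 1 ≤ i ∧ i ≤ a.h ∧ 2 ≤ a.p i
      · obtain ⟨i, h1, h2, h3⟩ := hex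
        obtain ⟨ha', hh', hp', hispf⟩ := pr_spec ha i h1 h2 h3
        have hmi : i ∈ Finset.Icc 1 a.h := Finset.mem_Icc.2 ⟨h1, h2⟩
        have hsum : (∑ t ∈ Finset.Icc 1 a.h, a.p t)
            = (∑ t ∈ Finset.Icc 1 a.h, (pr a i).p t) + 1 := by
          have e : ∀ t ∈ Finset.Icc 1 a.h, a.p t
              = (pr a i).p t + (if t = i then 1 else 0) := by
            intro t _
            rw [hp' t]
            rcases eq_or_ne t i with rfl | ht
            · split_ifs <;> omega
            · simp [ht]
          rw [Finset.sum_congr rfl e, sum_shiftN _ _ _ _ hmi]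
        have hsum' : (∑ t ∈ Finset.Icc 1 (pr a i).h, (pr a i).p t) ≤ P := by
          rw [hh']
          omega
        obtain ⟨a'', ha'', hh'', hp1, hrt⟩ := ih (pr a i) ha' hsum'
        refine ⟨a'', ha'', by rw [hh'', hh'], hp1, Relation.ReflTransGen.head ?_ hrt⟩
        exact ⟨ha, ha', i, i - 1, Or.inl hispf⟩
      · push_neg at hex
        refine ⟨a, ha, rfl, ?_, Relation.ReflTransGen.refl⟩
        intro i hi1 hi2
        have h1 := ha.1 i hi1 hi2
        have h2 := hex i hi1 hi2
        omega

/-- Reducibility of the height. -/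
def RedP (a : BSeq) : Prop :=
  2 ≤ a.h ∧ (∑ i ∈ Finset.range (a.h + 1), i * a.f i) + 1
    ≤ (a.h - 1) * (∑ i ∈ Finset.range (a.h + 1), a.f i)

lemma heightstep {n A : ℕ} {a : BSeq} (ha : a ∈ Sset n A)
    (hp1 : ∀ i, 1 ≤ i → i ≤ a.h → a.p i = 1) (hred : RedP a) :
    ∃ a', a' ∈ Sset n A ∧ a'.h = a.h - 1 ∧ (∀ i, 1 ≤ i → i ≤ a'.h → a'.p i = 1) ∧
      Relation.ReflTransGen (BAdj n A) a a' := by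
  obtain ⟨h2, hred⟩ := hred
  set F := ∑ i ∈ Finset.range (a.h + 1), a.f i with hFdef
  set S := ∑ i ∈ Finset.range (a.h + 1), i * a.f i with hSdef
  set q := S / (a.h - 1) with hqdef
  set r := S % (a.h - 1) with hrdef
  set rr := if r = 0 then 0 else 1 with hrrdef
  have hh1 : 1 ≤ a.h - 1 := by omega
  have hrlt : r < a.h - 1 := Nat.mod_lt _ (by omega)
  have hqr : (a.h - 1) * q + r = S := Nat.div_add_mod S (a.h - 1)
  have hqF : q < F := by
    by_contra hc
    push_neg at hc
    have : (a.h - 1) * F ≤ (a.h - 1) * q := Nat.mul_le_mul_left _ hc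
    omega
  have hrr1 : rr ≤ 1 := by rw [hrrdef]; split_ifs <;> omega
  -- the target configuration with the same peaks, flats only at heights a.h-1, r, 0
  set c : BSeq := ⟨a.h,
    fun k => (if k = a.h - 1 then q else 0) + (if k = r then rr else 0)
      + (if k = 0 then F - q - rr else 0), a.p⟩ with hcdef
  have hchf : ∀ k, c.f k = (if k = a.h - 1 then q else 0) + (if k = r then rr else 0)
      + (if k = 0 then F - q - rr else 0) := fun k => rfl
  have hm1 : a.h - 1 ∈ Finset.range (a.h + 1) := by simp
  have hm2 : r ∈ Finset.range (a.h + 1) := by simp; omega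
  have hm3 : (0 : ℕ) ∈ Finset.range (a.h + 1) := by simp
  have hcF : (∑ k ∈ Finset.range (a.h + 1), c.f k) = F := by
    have e : ∀ k ∈ Finset.range (a.h + 1), c.f k
        = (((0 + if k = a.h - 1 then q else 0) + if k = r then rr else 0)
          + if k = 0 then F - q - rr else 0) := by
      intro k _; rw [hchf k]; ring
    rw [Finset.sum_congr rfl e, sum_shiftN _ _ _ _ hm3, sum_shiftN _ _ _ _ hm2,
      sum_shiftN _ _ _ _ hm1]
    simp
    omega
  have hcS : (∑ k ∈ Finset.range (a.h + 1), k * c.f k) = S := by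
    have e : ∀ k ∈ Finset.range (a.h + 1), k * c.f k
        = ((k * if k = a.h - 1 then q else 0) + (k * if k = r then rr else 0))
          + (k * if k = 0 then F - q - rr else 0) := by
      intro k _; rw [hchf k]; ring
    rw [Finset.sum_congr rfl e, Finset.sum_add_distrib, Finset.sum_add_distrib,
      sum_ite_mulN _ _ _ _ hm1, sum_ite_mulN _ _ _ _ hm2, sum_ite_mulN _ _ _ _ hm3]
    have : r * rr = r := by rw [hrrdef]; split_ifs <;> omega
    omega
  have hcmem : c ∈ Sset n A := by
    obtain ⟨hpos, hp0, hpz, hfz, hn, hA⟩ := ha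
    refine ⟨hpos, hp0, hpz, ?_, ?_, ?_⟩
    · intro k hk
      replace hk : a.h < k := hk
      show (if k = a.h - 1 then q else 0) + (if k = r then rr else 0)
        + (if k = 0 then F - q - rr else 0) = 0
      rw [if_neg (by omega : ¬ (k = a.h - 1)), if_neg (by omega : ¬ (k = r)),
        if_neg (by omega : ¬ (k = 0))]
    · show (∑ k ∈ Finset.range (a.h + 1), c.f k) + 2 * (∑ k ∈ Finset.Icc 1 a.h, a.p k) = n
      rw [hcF]; omega
    · show (∑ k ∈ Finset.range (a.h + 1), k * c.f k)
        + (∑ k ∈ Finset.Icc 1 a.h, (2 * k - 1) * a.p k) = A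
      rw [hcS]; omega
  -- a is connected to c by FF moves
  have hac : Relation.ReflTransGen (BAdj n A) a c := by
    apply ffconn (∑ t ∈ Finset.range a.h, |cdiff a c t|).toNat a c ha hcmem rfl (fun k => rfl)
    exact Int.self_le_toNat _
  -- choose the flat to lift
  have hjex : ∃ j, j + 2 ≤ a.h ∧ 1 ≤ c.f j := by
    by_cases hq0 : F - q - rr = 0
    · have hrne : r ≠ 0 := by
        intro h0
        rw [hrrdef, if_pos h0] at hq0
        omega
      refine ⟨r, by omega, ?_⟩
      rw [hchf r, if_neg (by omega), if_pos rfl, if_neg hrne, hrrdef, if_neg hrne]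
    · refine ⟨0, by omega, ?_⟩
      rw [hchf 0]
      split_ifs <;> omega
  obtain ⟨j, hj2, hfj⟩ := hjex
  have hcfh : c.f a.h = 0 := by
    rw [hchf a.h, if_neg (by omega), if_neg (by omega), if_neg (by omega)]
  have hcph : c.p a.h = 1 := hp1 a.h (by omega) (le_refl _)
  obtain ⟨ha', hh', hp', hispf⟩ := hrm_spec hcmem j (by exact h2) hcph hcfh (by exact hj2) hfj
  refine ⟨hrm c j, ha', hh', ?_, hac.tail ⟨hcmem, ha', a.h, j, Or.inl hispf⟩⟩
  intro i hi1 hi2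
  rw [hh'] at hi2
  replace hi2 : i ≤ a.h - 1 := hi2
  have hch : c.h = a.h := rfl
  rw [hp' i, if_neg (show ¬ (i = c.h) by rw [hch]; omega)]
  show a.p i - 0 = 1
  rw [hp1 i hi1 (by omega)]

lemma heightnorm {n A : ℕ} (H : ℕ) : ∀ a, a ∈ Sset n A →
    (∀ i, 1 ≤ i → i ≤ a.h → a.p i = 1) → a.h ≤ H →
    ∃ a', a' ∈ Sset n A ∧ (∀ i, 1 ≤ i → i ≤ a'.h → a'.p i = 1) ∧ ¬ RedP a' ∧
      Relation.ReflTransGen (BAdj n A) a a' := by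
  induction H with
  | zero =>
      intro a ha hp1 hH
      refine ⟨a, ha, hp1, ?_, Relation.ReflTransGen.refl⟩
      intro hred
      have := hred.1
      omega
  | succ H ih =>
      intro a ha hp1 hH
      by_cases hred : RedP a
      · have h2 := hred.1
        obtain ⟨a1, ha1, hh1, hp1', hrt⟩ := heightstep ha hp1 hred
        obtain ⟨a', ha', hp'', hnred, hrt'⟩ := ih a1 ha1 hp1' (by omega)
        exact ⟨a', ha', hp'', hnred, hrt.trans hrt'⟩
      · exact ⟨a, ha, hp1, hred, Relation.ReflTransGen.refl⟩

lemma hfacts {n A : ℕ} {a : BSeq} (ha : a ∈ Sset n A)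
    (hp1 : ∀ i, 1 ≤ i → i ≤ a.h → a.p i = 1) :
    (∑ i ∈ Finset.range (a.h + 1), a.f i) + 2 * a.h = n ∧
    (∑ i ∈ Finset.range (a.h + 1), i * a.f i) + a.h ^ 2 = A ∧
    (∑ i ∈ Finset.range (a.h + 1), i * a.f i)
      ≤ a.h * (∑ i ∈ Finset.range (a.h + 1), a.f i) := by
  obtain ⟨hpos, hp0, hpz, hfz, hn, hA⟩ := ha
  have hP : (∑ i ∈ Finset.Icc 1 a.h, a.p i) = a.h := by
    have e : ∀ i ∈ Finset.Icc 1 a.h, a.p i = 1 := by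
      intro i hi
      simp only [Finset.mem_Icc] at hi
      exact hp1 i hi.1 hi.2
    rw [Finset.sum_congr rfl e, Finset.sum_const, smul_eq_mul, mul_one, Nat.card_Icc]
    omega
  have hT : (∑ i ∈ Finset.Icc 1 a.h, (2 * i - 1) * a.p i) = a.h ^ 2 := by
    have e : ∀ i ∈ Finset.Icc 1 a.h, (2 * i - 1) * a.p i = 2 * i - 1 := by
      intro i hi
      simp only [Finset.mem_Icc] at hi
      rw [hp1 i hi.1 hi.2, mul_one]
    rw [Finset.sum_congr rfl e, sq_sum]
  have hle : (∑ i ∈ Finset.range (a.h + 1), i * a.f i)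
      ≤ ∑ i ∈ Finset.range (a.h + 1), a.h * a.f i := by
    apply Finset.sum_le_sum
    intro i hi
    simp only [Finset.mem_range] at hi
    exact Nat.mul_le_mul_right _ (by omega)
  rw [← Finset.mul_sum] at hle
  exact ⟨by omega, by omega, hle⟩

lemma uniq_aux {n A : ℕ} {a b : BSeq} (ha : a ∈ Sset n A) (hb : b ∈ Sset n A)
    (hpa : ∀ i, 1 ≤ i → i ≤ a.h → a.p i = 1) (hpb : ∀ i, 1 ≤ i → i ≤ b.h → b.p i = 1)
    (hnb : ¬ RedP b) (hlt : a.h < b.h) : False := by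
  obtain ⟨hna, hAa, hSa⟩ := hfacts ha hpa
  obtain ⟨hnb', hAb, hSb⟩ := hfacts hb hpb
  by_cases h2 : 2 ≤ b.h
  · have hnred : (b.h - 1) * (∑ i ∈ Finset.range (b.h + 1), b.f i)
        ≤ ∑ i ∈ Finset.range (b.h + 1), i * b.f i := by
      by_contra hc
      push_neg at hc
      exact hnb ⟨h2, by omega⟩
    have c1 : ((∑ i ∈ Finset.range (a.h + 1), i * a.f i : ℕ) : ℤ)
        ≤ (a.h : ℤ) * ((∑ i ∈ Finset.range (a.h + 1), a.f i : ℕ) : ℤ) := by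
      exact_mod_cast hSa
    have c2 : ((b.h : ℤ) - 1) * ((∑ i ∈ Finset.range (b.h + 1), b.f i : ℕ) : ℤ)
        ≤ ((∑ i ∈ Finset.range (b.h + 1), i * b.f i : ℕ) : ℤ) := by
      have h' : (((b.h - 1 : ℕ)) : ℤ) * ((∑ i ∈ Finset.range (b.h + 1), b.f i : ℕ) : ℤ)
          ≤ ((∑ i ∈ Finset.range (b.h + 1), i * b.f i : ℕ) : ℤ) := by exact_mod_cast hnred
      rwa [show (((b.h - 1 : ℕ)) : ℤ) = (b.h : ℤ) - 1 by omega] at h'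
    have c3 : ((∑ i ∈ Finset.range (a.h + 1), a.f i : ℕ) : ℤ) + 2 * (a.h : ℤ) = (n : ℤ) := by
      exact_mod_cast hna
    have c4 : ((∑ i ∈ Finset.range (a.h + 1), i * a.f i : ℕ) : ℤ) + (a.h : ℤ) ^ 2 = (A : ℤ) := by
      exact_mod_cast hAa
    have c5 : ((∑ i ∈ Finset.range (b.h + 1), b.f i : ℕ) : ℤ) + 2 * (b.h : ℤ) = (n : ℤ) := by
      exact_mod_cast hnb'
    have c6 : ((∑ i ∈ Finset.range (b.h + 1), i * b.f i : ℕ) : ℤ) + (b.h : ℤ) ^ 2 = (A : ℤ) := by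
      exact_mod_cast hAb
    have hltz : (a.h : ℤ) < (b.h : ℤ) := by exact_mod_cast hlt
    have hFb0 : (0 : ℤ) ≤ ((∑ i ∈ Finset.range (b.h + 1), b.f i : ℕ) : ℤ) := by positivity
    have hFa0 : (0 : ℤ) ≤ ((∑ i ∈ Finset.range (a.h + 1), a.f i : ℕ) : ℤ) := by positivity
    have key : (0 : ℤ) ≤ ((b.h : ℤ) - 1 - (a.h : ℤ))
        * ((n : ℤ) - ((b.h : ℤ) - 1) - (a.h : ℤ)) := by
      apply mul_nonneg
      · linarith
      · linarith
    nlinarith [key, c1, c2, c3, c4, c5, c6]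
  · have hbh : b.h = 1 := by omega
    have hah : a.h = 0 := by omega
    have hSa0 : (∑ i ∈ Finset.range (a.h + 1), i * a.f i) = 0 := by
      rw [hah]
      simp
    have e1 : a.h ^ 2 = 0 := by rw [hah]; norm_num
    have e2 : b.h ^ 2 = 1 := by rw [hbh]; norm_num
    omega

lemma badj_symm (n A : ℕ) : Symmetric (BAdj n A) := by
  rintro x y ⟨hx, hy, i, j, hc⟩
  exact ⟨hy, hx, i, j, by tauto⟩

theorem main_connected (n A : ℕ) (a b : BSeq)
    (ha : a ∈ Sset n A) (hb : b ∈ Sset n A) :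
    Relation.ReflTransGen (BAdj n A) a b := by
  obtain ⟨a1, ha1, hha1, hpa1, hrta⟩ :=
    peaknorm (∑ i ∈ Finset.Icc 1 a.h, a.p i) a ha (le_refl _)
  obtain ⟨a2, ha2, hpa2, hnra2, hrta2⟩ := heightnorm a1.h a1 ha1 hpa1 (le_refl _)
  obtain ⟨b1, hb1, hhb1, hpb1, hrtb⟩ :=
    peaknorm (∑ i ∈ Finset.Icc 1 b.h, b.p i) b hb (le_refl _)
  obtain ⟨b2, hb2, hpb2, hnrb2, hrtb2⟩ := heightnorm b1.h b1 hb1 hpb1 (le_refl _)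
  have hhh : a2.h = b2.h := by
    rcases lt_trichotomy a2.h b2.h with h | h | h
    · exact absurd (uniq_aux ha2 hb2 hpa2 hpb2 hnrb2 h) (fun x => x)
    · exact h
    · exact absurd (uniq_aux hb2 ha2 hpb2 hpa2 hnra2 h) (fun x => x)
  have hpp : ∀ k, b2.p k = a2.p k := by
    intro k
    by_cases hk0 : k = 0
    · rw [hk0, ha2.2.1, hb2.2.1]
    · by_cases hkh : k ≤ a2.h
      · rw [hpa2 k (by omega) hkh, hpb2 k (by omega) (by omega)]
      · rw [ha2.2.2.1 k (by omega), hb2.2.2.1 k (by omega)]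
  have hab : Relation.ReflTransGen (BAdj n A) a2 b2 := by
    apply ffconn (∑ t ∈ Finset.range a2.h, |cdiff a2 b2 t|).toNat a2 b2 ha2 hb2 hhh.symm hpp
    exact Int.self_le_toNat _
  have h1 : Relation.ReflTransGen (BAdj n A) a b2 := (hrta.trans hrta2).trans hab
  have h2 : Relation.ReflTransGen (BAdj n A) b b2 := hrtb.trans hrtb2
  exact h1.trans ((@Relation.ReflTransGen.stdSymm _ _ ⟨fun x y h => badj_symm n A h⟩).symm _ _ h2)


end BP

/-- the graph on `S(n,A)` induced by the local operations is connected. -/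
theorem building_sequences_graph_connected (n A : ℕ) (a b : BSeq)
    (ha : a ∈ Sset n A) (hb : b ∈ Sset n A) :
    Relation.ReflTransGen (BAdj n A) a b :=
  BP.main_connected n A a b ha hb
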